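/- Let (X_i) be IID with E[(X⁺)^s] < ∞ for some s > 1, and N a positive-integer-valued random variable independent of (X_i) with E[N^s] < ∞. Then E[((S_N)⁺)^s] ≤ E[(X⁺)^s]·E[N^s]. -/

import Mathlib

open MeasureTheory ProbabilityTheory Real Filter
open scoped ENNReal


lemma aux_n {Ω : Type*} [MeasurableSpace Ω] (μ : Measure Ω) [IsProbabilityMeasure μ]
    (X : ℕ → Ω → ℝ) (hXmeas : ∀ i, Measurable (X i))
    (hXident : ∀ i, IdentDistrib (X i) (X 0) μ μ)
    (s : ℝ) (hs : 1 < s) (n : ℕ) :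
    ∫⁻ ω, ENNReal.ofReal ((max (∑ k ∈ Finset.range n, X k ω) 0) ^ s) ∂μ
      ≤ ENNReal.ofReal ((n : ℝ) ^ s) * ∫⁻ ω, ENNReal.ofReal ((max (X 0 ω) 0) ^ s) ∂μ := by
  have hs0 : (0:ℝ) < s := lt_trans one_pos hs
  set Y : ℕ → Ω → ℝ := fun k ω => max (X k ω) 0 with hY
  have hYmeas : ∀ k, Measurable (Y k) := fun k => (hXmeas k).max measurable_const
  have hYnn : ∀ k ω, 0 ≤ Y k ω := fun k ω => le_max_right _ _
  set p : ℝ≥0∞ := ENNReal.ofReal s with hp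
  have hp0 : p ≠ 0 := by simp [hp, ENNReal.ofReal_eq_zero, not_le, hs0]
  have hptop : p ≠ ∞ := ENNReal.ofReal_ne_top
  have hptor : p.toReal = s := ENNReal.toReal_ofReal hs0.le
  have hp1 : 1 ≤ p := by
    rw [hp, ← ENNReal.ofReal_one]; exact ENNReal.ofReal_le_ofReal hs.le
  -- lintegral of (nonneg fun)^s equals eLpNorm^s
  have key : ∀ (f : Ω → ℝ), Measurable f → (∀ ω, 0 ≤ f ω) →
      ∫⁻ ω, ENNReal.ofReal (f ω ^ s) ∂μ = (eLpNorm f p μ) ^ s := by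
    intro f hf hfnn
    rw [eLpNorm_eq_lintegral_rpow_enorm_toReal hp0 hptop, hptor, ← ENNReal.rpow_mul,
      one_div_mul_cancel hs0.ne', ENNReal.rpow_one]
    refine lintegral_congr fun ω => ?_
    rw [Real.enorm_eq_ofReal (hfnn ω), ENNReal.ofReal_rpow_of_nonneg (hfnn ω) hs0.le]
  -- step 1: pointwise bound
  have step1 : ∫⁻ ω, ENNReal.ofReal ((max (∑ k ∈ Finset.range n, X k ω) 0) ^ s) ∂μ
      ≤ ∫⁻ ω, ENNReal.ofReal ((∑ k ∈ Finset.range n, Y k ω) ^ s) ∂μ := by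
    refine lintegral_mono fun ω => ENNReal.ofReal_le_ofReal ?_
    have h1 : max (∑ k ∈ Finset.range n, X k ω) 0 ≤ ∑ k ∈ Finset.range n, Y k ω := by
      refine max_le (Finset.sum_le_sum fun k _ => le_max_left _ _)
        (Finset.sum_nonneg fun k _ => hYnn k ω)
    exact Real.rpow_le_rpow (le_max_right _ _) h1 hs0.le
  refine step1.trans ?_
  have hsum_meas : Measurable fun ω => ∑ k ∈ Finset.range n, Y k ω :=
    Finset.measurable_sum _ fun k _ => hYmeas k
  rw [key _ hsum_meas (fun ω => Finset.sum_nonneg fun k _ => hYnn k ω)]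
  have mink : eLpNorm (fun ω => ∑ k ∈ Finset.range n, Y k ω) p μ
      ≤ (n : ℝ≥0∞) * eLpNorm (Y 0) p μ := by
    have := eLpNorm_sum_le (μ := μ) (f := Y) (s := Finset.range n)
      (fun k _ => (hYmeas k).aestronglyMeasurable) hp1
    have heq : ∀ k, eLpNorm (Y k) p μ = eLpNorm (Y 0) p μ := fun k =>
      ((hXident k).comp (measurable_id.max measurable_const)).eLpNorm_eq p
    calc eLpNorm (fun ω => ∑ k ∈ Finset.range n, Y k ω) p μ
        = eLpNorm (∑ k ∈ Finset.range n, Y k) p μ := by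
          congr 1; ext ω; simp
      _ ≤ ∑ k ∈ Finset.range n, eLpNorm (Y k) p μ := this
      _ = (n : ℝ≥0∞) * eLpNorm (Y 0) p μ := by
          simp [heq, Finset.sum_const, mul_comm]
  calc (eLpNorm (fun ω => ∑ k ∈ Finset.range n, Y k ω) p μ) ^ s
      ≤ ((n : ℝ≥0∞) * eLpNorm (Y 0) p μ) ^ s := ENNReal.rpow_le_rpow mink hs0.le
    _ = (n : ℝ≥0∞) ^ s * (eLpNorm (Y 0) p μ) ^ s := ENNReal.mul_rpow_of_nonneg _ _ hs0.le
    _ = ENNReal.ofReal ((n : ℝ) ^ s) * ∫⁻ ω, ENNReal.ofReal ((Y 0 ω) ^ s) ∂μ := by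
        rw [key _ (hYmeas 0) (fun ω => hYnn 0 ω)]
        congr 1
        rw [← ENNReal.ofReal_natCast n, ENNReal.ofReal_rpow_of_nonneg (Nat.cast_nonneg n) hs0.le]


/-- For an independently stopped random walk with IID increments and `s > 1`,
if `E[(X⁺)^s] < ∞` and `E[N^s] < ∞`, then
`E[((S_N)⁺)^s] ≤ E[(X⁺)^s] · E[N^s]` (Minkowski). -/
theorem stopped_sum_moment_bound_minkowski
    {Ω : Type*} [MeasurableSpace Ω] (μ : Measure Ω) [IsProbabilityMeasure μ]
    (X : ℕ → Ω → ℝ) (hXmeas : ∀ i, Measurable (X i))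
    (hXindep : iIndepFun X μ)
    (hXident : ∀ i, IdentDistrib (X i) (X 0) μ μ)
    (N : Ω → ℕ) (hNmeas : Measurable N) (hNpos : ∀ ω, 1 ≤ N ω)
    (hNindep : IndepFun (fun ω i => X i ω) N μ)
    (s : ℝ) (hs : 1 < s)
    (hXs : Integrable (fun ω => (max (X 0 ω) 0) ^ s) μ)
    (hNs : Integrable (fun ω => (N ω : ℝ) ^ s) μ) :
    ∫⁻ ω, ENNReal.ofReal ((max (∑ k ∈ Finset.range (N ω), X k ω) 0) ^ s) ∂μ
      ≤ ENNReal.ofReal (∫ ω, (max (X 0 ω) 0) ^ s ∂μ)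
        * ENNReal.ofReal (∫ ω, (N ω : ℝ) ^ s ∂μ) := by
  have hs0 : (0:ℝ) < s := lt_trans one_pos hs
  set I : ℝ≥0∞ := ∫⁻ ω, ENNReal.ofReal ((max (X 0 ω) 0) ^ s) ∂μ with hI
  set f : ℕ → Ω → ℝ≥0∞ :=
    fun n ω => ENNReal.ofReal ((max (∑ k ∈ Finset.range n, X k ω) 0) ^ s) with hf
  have hfmeas : ∀ n, Measurable (f n) := fun n =>
    (((Finset.measurable_sum _ fun k _ => hXmeas k).max measurable_const).pow_const
      s).ennreal_ofReal
  -- decomposition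
  have hdecomp : (fun ω => f (N ω) ω)
      = fun ω => ∑' n, Set.indicator (N ⁻¹' {n}) (f n) ω := by
    funext ω
    have h1 : ∀ m : ℕ, m ≠ N ω → Set.indicator (N ⁻¹' {m}) (f m) ω = 0 := by
      intro m hm
      exact Set.indicator_of_notMem (by simp [Ne.symm hm]) _
    rw [tsum_eq_single (N ω) h1]
    exact (Set.indicator_of_mem (by simp) _).symm
  have hNn : ∀ n, MeasurableSet (N ⁻¹' {n}) := fun n => hNmeas (measurableSet_singleton n)
  -- independence per n
  have hterm : ∀ n, ∫⁻ ω, Set.indicator (N ⁻¹' {n}) (f n) ω ∂μ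
      = μ (N ⁻¹' {n}) * ∫⁻ ω, f n ω ∂μ := by
    intro n
    set g : Ω → ℝ≥0∞ := fun ω => Set.indicator ({n} : Set ℕ) (fun _ => 1) (N ω) with hg
    have hGmeas : Measurable fun y : ℕ → ℝ =>
        ENNReal.ofReal ((max (∑ k ∈ Finset.range n, y k) 0) ^ s) :=
      (((Finset.measurable_sum _ fun k _ => measurable_pi_apply k).max
        measurable_const).pow_const s).ennreal_ofReal
    have hhmeas : Measurable fun m : ℕ => Set.indicator ({n} : Set ℕ) (fun _ => (1:ℝ≥0∞)) m :=
      measurable_of_countable _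
    have hindep : IndepFun (f n) g μ := hNindep.comp hGmeas hhmeas
    have heq : (fun ω => Set.indicator (N ⁻¹' {n}) (f n) ω) = fun ω => (f n * g) ω := by
      funext ω
      by_cases h : N ω = n
      · simp [hg, Set.indicator_of_mem, h]
      · simp [hg, Set.indicator_of_notMem, h]
    have hgmeas : Measurable g := hhmeas.comp hNmeas
    rw [heq, lintegral_mul_eq_lintegral_mul_lintegral_of_indepFun (hfmeas n) hgmeas hindep]
    rw [mul_comm]
    congr 1
    have : (fun ω => g ω) = Set.indicator (N ⁻¹' {n}) (fun _ => (1:ℝ≥0∞)) := by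
      funext ω
      by_cases h : N ω = n
      · simp [hg, h]
      · simp [hg, h]
    rw [hg] at this ⊢
    rw [this, lintegral_indicator (hNn n)]
    simp
  -- per-n bound from aux_n
  have hbound : ∀ n, ∫⁻ ω, f n ω ∂μ ≤ ENNReal.ofReal ((n : ℝ) ^ s) * I :=
    fun n => aux_n μ X hXmeas hXident s hs n
  calc ∫⁻ ω, f (N ω) ω ∂μ
      = ∑' n, ∫⁻ ω, Set.indicator (N ⁻¹' {n}) (f n) ω ∂μ := by
        rw [hdecomp, lintegral_tsum fun n => ((hfmeas n).indicator (hNn n)).aemeasurable]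
    _ ≤ ∑' n, μ (N ⁻¹' {n}) * (ENNReal.ofReal ((n : ℝ) ^ s) * I) := by
        refine ENNReal.tsum_le_tsum fun n => ?_
        rw [hterm n]
        exact mul_le_mul_right (hbound n) _
    _ = (∑' n, μ (N ⁻¹' {n}) * ENNReal.ofReal ((n : ℝ) ^ s)) * I := by
        simp_rw [← mul_assoc]
        rw [ENNReal.tsum_mul_right]
    _ = (∫⁻ ω, ENNReal.ofReal ((N ω : ℝ) ^ s) ∂μ) * I := by
        congr 1
        have hmg : Measurable fun m : ℕ => ENNReal.ofReal ((m : ℝ) ^ s) :=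
          measurable_of_countable _
        rw [← lintegral_map hmg hNmeas, lintegral_countable']
        refine tsum_congr fun n => ?_
        rw [Measure.map_apply hNmeas (measurableSet_singleton n), mul_comm]
    _ = I * ∫⁻ ω, ENNReal.ofReal ((N ω : ℝ) ^ s) ∂μ := mul_comm _ _
    _ = ENNReal.ofReal (∫ ω, (max (X 0 ω) 0) ^ s ∂μ)
        * ENNReal.ofReal (∫ ω, (N ω : ℝ) ^ s ∂μ) := by
        rw [ofReal_integral_eq_lintegral_ofReal hXs
          (Filter.Eventually.of_forall fun ω => Real.rpow_nonneg (le_max_right _ _) s),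
          ofReal_integral_eq_lintegral_ofReal hNs
          (Filter.Eventually.of_forall fun ω => Real.rpow_nonneg (Nat.cast_nonneg _) s)]
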